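/- Let A and B be d×d complex matrices with AB = 0. Writing the characteristic polynomial of a d×d matrix M as χ_M(t) = det(M − t·I) = t^d + c_1(M) t^{d−1} + ⋯ + c_d(M), one has c_i(A) · c_j(B) = 0 whenever i + j > d. -/

import Mathlib

open Polynomial Matrix

/-- For a `d × d` complex matrix `M`, the coefficient `c_k(M)` defined by the expansion
`χ_M(t) = det (M - t • 1) = t^d + c_1(M) t^(d-1) + ⋯ + c_d(M)`;
that is, `c_k(M)` is the coefficient of `t^(d-k)` in `det (M - t • 1)`. -/
noncomputable def charCoeff (d : ℕ) (M : Matrix (Fin d) (Fin d) ℂ) (k : ℕ) : ℂ :=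
  (Matrix.det (M.map Polynomial.C - (Polynomial.X : Polynomial ℂ) • 1)).coeff (d - k)

lemma charCoeff_eq (d : ℕ) (M : Matrix (Fin d) (Fin d) ℂ) (k : ℕ) :
    charCoeff d M k = (-1 : ℂ) ^ d * M.charpoly.coeff (d - k) := by
  have h : M.map Polynomial.C - (Polynomial.X : Polynomial ℂ) • 1 = -(charmatrix M) := by
    ext i j
    by_cases hij : i = j <;>
      simp [charmatrix_apply, Matrix.smul_apply, Matrix.one_apply, hij, sub_eq_neg_add]
  rw [charCoeff, h, Matrix.det_neg, Matrix.charpoly, Fintype.card_fin,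
    show ((-1 : Polynomial ℂ) ^ d) = Polynomial.C ((-1 : ℂ) ^ d) by simp,
    Polynomial.coeff_C_mul]

lemma charCoeff_eq_zero (d : ℕ) (M : Matrix (Fin d) (Fin d) ℂ) (k : ℕ)
    (hk : k ≤ d) (hr : M.rank < k) : charCoeff d M k = 0 := by
  rw [charCoeff_eq]
  set φ : Module.End ℂ (Fin d → ℂ) := Matrix.toLin' M with hφ
  have hchar : M.charpoly = φ.charpoly := by
    rw [← LinearMap.charpoly_toMatrix φ (Pi.basisFun ℂ (Fin d))]
    rw [LinearMap.toMatrix_eq_toMatrix', hφ, LinearMap.toMatrix'_toLin']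
  have hker : LinearMap.ker φ ≤ φ.maxGenEigenspace 0 := by
    intro x hx
    rw [Module.End.mem_maxGenEigenspace]
    exact ⟨1, by simpa using hx⟩
  have hrank : M.rank + Module.finrank ℂ (LinearMap.ker φ) = d := by
    have := LinearMap.finrank_range_add_finrank_ker φ
    rw [Matrix.rank]
    have hmv : M.mulVecLin = φ := rfl
    rw [hmv]
    simpa using this
  have htd : d - k < M.charpoly.natTrailingDegree := by
    rw [hchar, ← LinearMap.finrank_maxGenEigenspace_zero_eq]
    have h2 := Submodule.finrank_mono hker
    omega
  rw [Polynomial.coeff_eq_zero_of_lt_natTrailingDegree htd, mul_zero]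

/-- If `A`, `B` are `d × d` complex matrices with `A * B = 0`, then
`c_i(A) * c_j(B) = 0` whenever `i + j > d`. -/
theorem charCoeff_mul_charCoeff_eq_zero
    (d : ℕ) (A B : Matrix (Fin d) (Fin d) ℂ) (hAB : A * B = 0)
    (i j : ℕ) (hi : i ≤ d) (hj : j ≤ d) (hij : d < i + j) :
    charCoeff d A i * charCoeff d B j = 0 := by
  have hr := Matrix.rank_add_rank_le_card_of_mul_eq_zero hAB
  simp only [Fintype.card_fin] at hr
  rcases lt_or_ge A.rank i with h | h
  · rw [charCoeff_eq_zero d A i hi h, zero_mul]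
  · rw [charCoeff_eq_zero d B j hj (by omega), mul_zero]
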